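/- arXiv:1903.00202 — 2 statements merged into one kernel-verified Lean document; each statement's English description precedes it below -/
import Mathlib

section
/- Let G be a countable group. The set of amenable subgroups of G is closed in Sub(G) with respect to the Chabauty topology. -/
open scoped Classical ENNReal
open Topology Filter

noncomputable section

namespace QR

/-- The evaluation of a unitary representation on an element of the group algebra `ℂ[G]`. -/
def repAlg {G : Type*} [Group G] {E : Type*} [NormedAddCommGroup E] [NormedSpace ℂ E]
    (π : G →* (E →L[ℂ] E)) (f : MonoidAlgebra ℂ G) : E →L[ℂ] E :=
  MonoidAlgebra.lift ℂ (E →L[ℂ] E) G π f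

/-- Weak containment `ρ ≺ π` of representations: `‖ρ(f)‖ ≤ ‖π(f)‖` for every element `f` of
the group algebra `ℂ[G]`. -/
def WeaklyContained {G : Type*} [Group G] {E F : Type*}
    [NormedAddCommGroup E] [NormedSpace ℂ E] [NormedAddCommGroup F] [NormedSpace ℂ F]
    (ρ : G →* (E →L[ℂ] E)) (π : G →* (F →L[ℂ] F)) : Prop :=
  ∀ f : MonoidAlgebra ℂ G, ‖repAlg ρ f‖ ≤ ‖repAlg π f‖

/-- The trivial (one-dimensional) representation `1_G`. -/
def trivialRep (G : Type*) [Group G] : G →* (ℂ →L[ℂ] ℂ) := 1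

section lp

variable {X K : Type*} [NormedAddCommGroup K] [InnerProductSpace ℂ K]

lemma memTwist (e : X ≃ X) (U : X → (K ≃ₗᵢ[ℂ] K)) (F : lp (fun _ : X => K) 2) :
    Memℓp (fun x => U x (F (e.symm x))) 2 := by
  apply memℓp_gen
  have hs : Summable fun x : X => ‖F x‖ ^ (2 : ℝ≥0∞).toReal :=
    (lp.memℓp F).summable (by norm_num)
  have : Summable fun x : X => ‖F (e.symm x)‖ ^ (2 : ℝ≥0∞).toReal :=
    (e.symm.summable_iff (f := fun x : X => ‖F x‖ ^ (2 : ℝ≥0∞).toReal)).2 hs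
  simpa [LinearIsometryEquiv.norm_map] using this

/-- The twisted translation operator on `ℓ²(X, K)`. -/
def twistOp (e : X ≃ X) (U : X → (K ≃ₗᵢ[ℂ] K)) :
    lp (fun _ : X => K) 2 →L[ℂ] lp (fun _ : X => K) 2 :=
  LinearMap.mkContinuous
    { toFun := fun F => ⟨fun x => U x (F (e.symm x)), memTwist e U F⟩
      map_add' := by
        intro F G'
        apply lp.ext
        funext x
        simp [lp.coeFn_add, Pi.add_apply]; rfl
      map_smul' := by
        intro c F
        apply lp.ext
        funext x
        simp [lp.coeFn_smul, Pi.smul_apply] }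
    1
    (by
      intro F
      have h2 : (0:ℝ) < (2 : ℝ≥0∞).toReal := by norm_num
      rw [one_mul]
      apply le_of_eq
      rw [lp.norm_eq_tsum_rpow h2, lp.norm_eq_tsum_rpow h2]
      congr 1
      have := (e.symm).tsum_eq (f := fun x : X => ‖F x‖ ^ (2 : ℝ≥0∞).toReal)
      simpa [LinearIsometryEquiv.norm_map] using this)

@[simp] lemma twistOp_apply (e : X ≃ X) (U : X → (K ≃ₗᵢ[ℂ] K))
    (F : lp (fun _ : X => K) 2) (x : X) :
    (twistOp e U F : ∀ _ : X, K) x = U x (F (e.symm x)) := rfl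

end lp

/-- The permutation (unitary) representation of `Γ` on `ℓ²(X)` attached to an action of `Γ`
on the set `X`, given by `(π(g)F)(x) = F(g⁻¹ • x)`. -/
def permRep (Γ X : Type*) [Group Γ] [MulAction Γ X] :
    Γ →* (lp (fun _ : X => ℂ) 2 →L[ℂ] lp (fun _ : X => ℂ) 2) where
  toFun g := twistOp (MulAction.toPerm g) (fun _ => LinearIsometryEquiv.refl ℂ ℂ)
  map_one' := by
    apply ContinuousLinearMap.ext
    intro F
    apply lp.ext
    funext x
    simp
  map_mul' := by
    intro g g'
    apply ContinuousLinearMap.ext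
    intro F
    apply lp.ext
    funext x
    simp [mul_smul]

/-- The left regular representation `λ_G` of `G` on `ℓ²(G)`. -/
def regularRep (G : Type*) [Group G] :
    G →* (lp (fun _ : G => ℂ) 2 →L[ℂ] lp (fun _ : G => ℂ) 2) :=
  permRep G G

/-- The quasi-regular representation `λ_{G/H}` of `G` on `ℓ²(G/H)`. -/
def quasiRegRep (G : Type*) [Group G] (H : Subgroup G) :
    G →* (lp (fun _ : G ⧸ H => ℂ) 2 →L[ℂ] lp (fun _ : G ⧸ H => ℂ) 2) :=
  permRep G (G ⧸ H)

/-- Amenability of a (discrete) group, via the Hulanicki–Reiter characterization: the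
trivial representation is weakly contained in the left regular representation. -/
def IsAmenable (G : Type*) [Group G] : Prop :=
  WeaklyContained (trivialRep G) (regularRep G)

/-- The embedding of `Sub(G)` into `{0,1}^G` by characteristic functions. -/
def chabautyEmbed (G : Type*) [Group G] : Subgroup G → (G → Bool) :=
  fun H g => decide (g ∈ H)

/-- The Chabauty topology on the space of subgroups of a discrete group `G`: the topology
induced from the product topology on `{0,1}^G` via characteristic functions. -/
def chabautyTopology (G : Type*) [Group G] : TopologicalSpace (Subgroup G) :=
  TopologicalSpace.induced (chabautyEmbed G) inferInstance

/-- The conjugate subgroup `gHg⁻¹`. -/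
def conjSubgroup {G : Type*} [Group G] (g : G) (H : Subgroup G) : Subgroup G :=
  Subgroup.map (MulAut.conj g).toMonoidHom H

/-- The conjugacy class of a subgroup, as a subset of `Sub(G)`. -/
def conjClass {G : Type*} [Group G] (H : Subgroup G) : Set (Subgroup G) :=
  {K | ∃ g : G, conjSubgroup g H = K}

section Aux

variable {G : Type*} [Group G]

lemma permRep_eval {Γ X : Type*} [Group Γ] [MulAction Γ X] (g : Γ)
    (F : lp (fun _ : X => ℂ) 2) (x : X) :
    (permRep Γ X g F : ∀ _ : X, ℂ) x = F (g⁻¹ • x) := by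
  simp [permRep, twistOp_apply]

lemma repAlg_perm_apply {Γ X : Type*} [Group Γ] [MulAction Γ X]
    (f : MonoidAlgebra ℂ Γ) (F : lp (fun _ : X => ℂ) 2) (x : X) :
    (repAlg (permRep Γ X) f F : ∀ _ : X, ℂ) x = f.coeff.sum fun g c => c * F (g⁻¹ • x) := by
  rw [repAlg, MonoidAlgebra.lift_apply, Finsupp.sum, Finsupp.sum,
    ContinuousLinearMap.sum_apply, lp.coeFn_sum, Finset.sum_apply]
  refine Finset.sum_congr rfl fun g _ => ?_
  rw [ContinuousLinearMap.smul_apply, lp.coeFn_smul, Pi.smul_apply, smul_eq_mul,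
    permRep_eval]

lemma repAlg_regular_apply (f : MonoidAlgebra ℂ G) (F : lp (fun _ : G => ℂ) 2) (x : G) :
    (repAlg (regularRep G) f F : ∀ _ : G, ℂ) x = f.coeff.sum fun g c => c * F (g⁻¹ * x) := by
  simpa [smul_eq_mul, regularRep] using repAlg_perm_apply (Γ := G) (X := G) f F x

lemma norm_repAlg_trivial (f : MonoidAlgebra ℂ G) :
    ‖repAlg (trivialRep G) f‖ = ‖f.coeff.sum fun _ c => c‖ := by
  have h : repAlg (trivialRep G) f = (f.coeff.sum fun _ c => c) • (1 : ℂ →L[ℂ] ℂ) := by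
    rw [repAlg, MonoidAlgebra.lift_apply, Finsupp.sum, Finsupp.sum]
    simp only [trivialRep, MonoidHom.one_apply]
    rw [← Finset.sum_smul]
  rw [h, norm_smul (α := ℂ) (β := ℂ →L[ℂ] ℂ)]
  simp [ContinuousLinearMap.norm_id]

section Embed
variable (H : Subgroup G)

private lemma hp2 : (0:ℝ) < (2 : ℝ≥0∞).toReal := by norm_num

/-- Extension by zero of a function on `H` to `G`. -/
def extFun (F : lp (fun _ : (H : Type _) => ℂ) 2) : G → ℂ :=
  fun g => if hg : g ∈ H then F ⟨g, hg⟩ else 0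

lemma extFun_coe (F : lp (fun _ : (H : Type _) => ℂ) 2) (h : H) :
    extFun H F (h : G) = F h := by
  simp [extFun]

lemma extFun_support (F : lp (fun _ : (H : Type _) => ℂ) 2) :
    Function.support (fun g => ‖extFun H F g‖ ^ (2 : ℝ≥0∞).toReal)
      ⊆ Set.range (fun h : H => (h : G)) := by
  intro g hg
  by_contra hr
  have hgH : g ∉ H := fun h => hr ⟨⟨g, h⟩, rfl⟩
  apply hg
  simp only [extFun, dif_neg hgH, norm_zero]
  exact Real.zero_rpow (ne_of_gt hp2)

lemma memℓp_extFun (F : lp (fun _ : (H : Type _) => ℂ) 2) : Memℓp (extFun H F) 2 := by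
  apply memℓp_gen
  have hs : Summable fun h : H => ‖F h‖ ^ (2 : ℝ≥0∞).toReal := (lp.memℓp F).summable hp2
  have hs' : Summable
      ((fun g => ‖extFun H F g‖ ^ (2 : ℝ≥0∞).toReal) ∘ (fun h : H => (h : G))) := by
    refine hs.congr fun h => ?_
    simp [Function.comp, extFun_coe]
  refine (Function.Injective.summable_iff Subtype.coe_injective ?_).mp hs'
  intro g hg
  by_contra hne
  exact hg (extFun_support H F hne)

/-- Extension by zero as an element of `ℓ²(G)`. -/
def extlp (F : lp (fun _ : (H : Type _) => ℂ) 2) : lp (fun _ : G => ℂ) 2 :=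
  ⟨extFun H F, memℓp_extFun H F⟩

@[simp] lemma extlp_apply (F : lp (fun _ : (H : Type _) => ℂ) 2) (g : G) :
    (extlp H F : ∀ _ : G, ℂ) g = extFun H F g := rfl

lemma norm_extlp (F : lp (fun _ : (H : Type _) => ℂ) 2) : ‖extlp H F‖ = ‖F‖ := by
  rw [lp.norm_eq_tsum_rpow hp2, lp.norm_eq_tsum_rpow hp2]
  congr 1
  calc ∑' g : G, ‖(extlp H F : ∀ _ : G, ℂ) g‖ ^ (2 : ℝ≥0∞).toReal
      = ∑' g : G, ‖extFun H F g‖ ^ (2 : ℝ≥0∞).toReal := tsum_congr fun g => rfl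
    _ = ∑' h : H, ‖extFun H F ((h : G))‖ ^ (2 : ℝ≥0∞).toReal :=
        (Function.Injective.tsum_eq Subtype.coe_injective (extFun_support H F)).symm
    _ = ∑' h : H, ‖(F : ∀ _ : H, ℂ) h‖ ^ (2 : ℝ≥0∞).toReal :=
        tsum_congr fun h => by rw [extFun_coe]

lemma intertwine_ext (f : MonoidAlgebra ℂ (H : Type _)) (F : lp (fun _ : (H : Type _) => ℂ) 2) :
    repAlg (regularRep G) (MonoidAlgebra.mapDomain (fun h : H => (h : G)) f) (extlp H F)
      = extlp H (repAlg (regularRep (H : Type _)) f F) := by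
  apply lp.ext
  funext g
  have L : (repAlg (regularRep G) (MonoidAlgebra.mapDomain (fun h : H => (h : G)) f)
        (extlp H F) : ∀ _ : G, ℂ) g
      = f.coeff.sum fun k c => c * extFun H F ((k : G)⁻¹ * g) := by
    rw [repAlg_regular_apply, MonoidAlgebra.coeff_mapDomain, Finsupp.sum_mapDomain_index_inj Subtype.coe_injective]
    rfl
  show _ = (extlp H (repAlg (regularRep (H : Type _)) f F) : ∀ _ : G, ℂ) g
  rw [L, extlp_apply]
  by_cases hg : g ∈ H
  · have R : extFun H (repAlg (regularRep (H : Type _)) f F) g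
        = f.coeff.sum fun k c => c * F (k⁻¹ * (⟨g, hg⟩ : H)) := by
      have : extFun H (repAlg (regularRep (H : Type _)) f F) g
          = (repAlg (regularRep (H : Type _)) f F : ∀ _ : H, ℂ) ⟨g, hg⟩ := by
        simp only [extFun]
        rw [dif_pos hg]
      rw [this, repAlg_regular_apply]
    rw [R]
    refine Finsupp.sum_congr fun k _ => ?_
    congr 1
    have hmem : (k : G)⁻¹ * g ∈ H := H.mul_mem (H.inv_mem k.2) hg
    have harg : (((k⁻¹ * (⟨g, hg⟩ : H)) : H) : G) = (k : G)⁻¹ * g := rfl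
    have : (k⁻¹ * (⟨g, hg⟩ : H)) = (⟨(k : G)⁻¹ * g, hmem⟩ : H) := Subtype.ext harg
    rw [this]
    show extFun H F ((k : G)⁻¹ * g) = _
    simp [extFun, hmem]
  · have R0 : extFun H (repAlg (regularRep (H : Type _)) f F) g = 0 := by
      simp [extFun, hg]
    rw [R0, Finsupp.sum]
    refine Finset.sum_eq_zero fun k _ => ?_
    have hmem : (k : G)⁻¹ * g ∉ H := by
      intro hm
      apply hg
      have := H.mul_mem k.2 hm
      simpa [mul_assoc] using this
    simp [extFun, hmem]

lemma norm_regular_le (f : MonoidAlgebra ℂ (H : Type _)) :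
    ‖repAlg (regularRep (H : Type _)) f‖
      ≤ ‖repAlg (regularRep G) (MonoidAlgebra.mapDomain (fun h : H => (h : G)) f)‖ := by
  refine ContinuousLinearMap.opNorm_le_bound _ (norm_nonneg _) fun F => ?_
  calc ‖repAlg (regularRep (H : Type _)) f F‖
      = ‖extlp H (repAlg (regularRep (H : Type _)) f F)‖ := (norm_extlp H _).symm
    _ = ‖repAlg (regularRep G) (MonoidAlgebra.mapDomain (fun h : H => (h : G)) f) (extlp H F)‖ := by
        rw [intertwine_ext]
    _ ≤ ‖repAlg (regularRep G) (MonoidAlgebra.mapDomain (fun h : H => (h : G)) f)‖ * ‖extlp H F‖ :=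
        ContinuousLinearMap.le_opNorm _ _
    _ = _ := by rw [norm_extlp]

end Embed
end Aux

section Coset

variable {G : Type*} [Group G] (H : Subgroup G)

lemma mk_mul_out (h : H) (q : Quotient (QuotientGroup.rightRel H)) :
    Quotient.mk (QuotientGroup.rightRel H) ((h : G) * q.out) = q := by
  conv_rhs => rw [← Quotient.out_eq q]
  apply Quotient.sound
  show (QuotientGroup.rightRel H) ((h : G) * q.out) q.out
  apply QuotientGroup.rightRel_apply.mpr
  have : q.out * ((h : G) * q.out)⁻¹ = (h : G)⁻¹ := by
    rw [mul_inv_rev]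
    exact mul_inv_cancel_left _ _
  rw [this]
  exact H.inv_mem h.2

lemma coset_bij : Function.Bijective
    (fun p : Quotient (QuotientGroup.rightRel H) × H => (p.2 : G) * p.1.out) := by
  constructor
  · rintro ⟨q, h⟩ ⟨q', h'⟩ heq
    simp only at heq
    have hq : q = q' := by
      calc q = Quotient.mk (QuotientGroup.rightRel H) ((h : G) * q.out) :=
            (mk_mul_out H h q).symm
        _ = Quotient.mk (QuotientGroup.rightRel H) ((h' : G) * q'.out) := by rw [heq]
        _ = q' := mk_mul_out H h' q'
    obtain rfl := hq
    have : (h : G) = (h' : G) := mul_right_cancel heq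
    exact Prod.ext rfl (Subtype.ext this)
  · intro g
    have hmem : g * (Quotient.mk (QuotientGroup.rightRel H) g).out⁻¹ ∈ H :=
      QuotientGroup.rightRel_apply.mp (Quotient.mk_out g)
    refine ⟨(Quotient.mk (QuotientGroup.rightRel H) g, ⟨_, hmem⟩), ?_⟩
    simp [inv_mul_cancel_right]

lemma memℓp_slice (F : lp (fun _ : G => ℂ) 2) (q : Quotient (QuotientGroup.rightRel H)) :
    Memℓp (fun h : H => (F : ∀ _ : G, ℂ) ((h : G) * q.out)) 2 := by
  apply memℓp_gen
  have hs : Summable fun g : G => ‖(F : ∀ _ : G, ℂ) g‖ ^ (2 : ℝ≥0∞).toReal :=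
    (lp.memℓp F).summable hp2
  have hinj : Function.Injective (fun h : H => (h : G) * q.out) :=
    (mul_left_injective q.out).comp Subtype.coe_injective
  exact hs.comp_injective hinj

/-- Restriction of `F ∈ ℓ²(G)` to the right coset indexed by `q`, as an element of `ℓ²(H)`. -/
def slice (F : lp (fun _ : G => ℂ) 2) (q : Quotient (QuotientGroup.rightRel H)) :
    lp (fun _ : (H : Type _) => ℂ) 2 :=
  ⟨_, memℓp_slice H F q⟩

@[simp] lemma slice_apply (F : lp (fun _ : G => ℂ) 2) (q : Quotient (QuotientGroup.rightRel H))
    (h : H) : (slice H F q : ∀ _ : (H : Type _), ℂ) h = (F : ∀ _ : G, ℂ) ((h : G) * q.out) := rfl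

lemma slice_repAlg (f : MonoidAlgebra ℂ (H : Type _)) (F : lp (fun _ : G => ℂ) 2)
    (q : Quotient (QuotientGroup.rightRel H)) (h : H) :
    (repAlg (regularRep G) (MonoidAlgebra.mapDomain (fun h : H => (h : G)) f) F : ∀ _ : G, ℂ)
        ((h : G) * q.out)
      = (repAlg (regularRep (H : Type _)) f (slice H F q) : ∀ _ : (H : Type _), ℂ) h := by
  rw [repAlg_regular_apply, repAlg_regular_apply,
    MonoidAlgebra.coeff_mapDomain, Finsupp.sum_mapDomain_index_inj Subtype.coe_injective]
  refine Finsupp.sum_congr fun k _ => ?_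
  congr 1
  show (F : ∀ _ : G, ℂ) ((k : G)⁻¹ * ((h : G) * q.out))
      = (F : ∀ _ : G, ℂ) (((k⁻¹ * h : H) : G) * q.out)
  have harg : (k : G)⁻¹ * ((h : G) * q.out) = ((k⁻¹ * h : H) : G) * q.out := by
    show _ = ((k : G)⁻¹ * (h : G)) * q.out
    rw [mul_assoc]
  rw [harg]

lemma norm_regular_ge (f : MonoidAlgebra ℂ (H : Type _)) :
    ‖repAlg (regularRep G) (MonoidAlgebra.mapDomain (fun h : H => (h : G)) f)‖
      ≤ ‖repAlg (regularRep (H : Type _)) f‖ := by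
  set C := ‖repAlg (regularRep (H : Type _)) f‖ with hC
  set A := repAlg (regularRep G) (MonoidAlgebra.mapDomain (fun h : H => (h : G)) f) with hA
  refine ContinuousLinearMap.opNorm_le_bound _ (norm_nonneg _) fun F => ?_
  set pt := (2 : ℝ≥0∞).toReal with hpt
  have key : ‖A F‖ ^ pt ≤ (C * ‖F‖) ^ pt := by
    set e := Equiv.ofBijective _ (coset_bij H) with he
    have hAF : Summable fun x : G => ‖(A F : ∀ _ : G, ℂ) x‖ ^ pt :=
      (lp.memℓp (A F)).summable hp2
    have hAFp : Summable fun p : Quotient (QuotientGroup.rightRel H) × H =>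
        ‖(A F : ∀ _ : G, ℂ) (e p)‖ ^ pt := hAF.comp_injective e.injective
    have hF : Summable fun x : G => ‖(F : ∀ _ : G, ℂ) x‖ ^ pt := (lp.memℓp F).summable hp2
    have hFp : Summable fun p : Quotient (QuotientGroup.rightRel H) × H =>
        ‖(F : ∀ _ : G, ℂ) (e p)‖ ^ pt := hF.comp_injective e.injective
    have hfibF : ∀ q, HasSum (fun h : H => ‖(F : ∀ _ : G, ℂ) (e (q, h))‖ ^ pt)
        (‖slice H F q‖ ^ pt) := by
      intro q
      have h1 : ∑' h : H, ‖(F : ∀ _ : G, ℂ) (e (q, h))‖ ^ pt = ‖slice H F q‖ ^ pt := by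
        rw [lp.norm_rpow_eq_tsum hp2]
        exact tsum_congr fun h => rfl
      exact h1 ▸ (hFp.prod_factor q).hasSum
    have hfibA : ∀ q, HasSum (fun h : H => ‖(A F : ∀ _ : G, ℂ) (e (q, h))‖ ^ pt)
        (‖repAlg (regularRep (H : Type _)) f (slice H F q)‖ ^ pt) := by
      intro q
      have h1 : ∑' h : H, ‖(A F : ∀ _ : G, ℂ) (e (q, h))‖ ^ pt
          = ‖repAlg (regularRep (H : Type _)) f (slice H F q)‖ ^ pt := by
        rw [lp.norm_rpow_eq_tsum hp2]
        exact tsum_congr fun h => congrArg (fun z : ℂ => ‖z‖ ^ pt) (slice_repAlg H f F q h)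
      exact h1 ▸ (hAFp.prod_factor q).hasSum
    have hFtot : HasSum (fun q => ‖slice H F q‖ ^ pt) (‖F‖ ^ pt) := by
      have h2 := hFp.hasSum.prod_fiberwise hfibF
      rwa [Equiv.tsum_eq e (fun x : G => ‖(F : ∀ _ : G, ℂ) x‖ ^ pt),
        ← lp.norm_rpow_eq_tsum hp2] at h2
    have hAtot : HasSum (fun q => ‖repAlg (regularRep (H : Type _)) f (slice H F q)‖ ^ pt)
        (‖A F‖ ^ pt) := by
      have h2 := hAFp.hasSum.prod_fiberwise hfibA
      rwa [Equiv.tsum_eq e (fun x : G => ‖(A F : ∀ _ : G, ℂ) x‖ ^ pt),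
        ← lp.norm_rpow_eq_tsum hp2] at h2
    have hle : ∀ q, ‖repAlg (regularRep (H : Type _)) f (slice H F q)‖ ^ pt
        ≤ C ^ pt * ‖slice H F q‖ ^ pt := by
      intro q
      rw [← Real.mul_rpow (norm_nonneg _) (norm_nonneg _)]
      exact Real.rpow_le_rpow (norm_nonneg _) (ContinuousLinearMap.le_opNorm _ _) (le_of_lt hp2)
    calc ‖A F‖ ^ pt
        = ∑' q, ‖repAlg (regularRep (H : Type _)) f (slice H F q)‖ ^ pt := hAtot.tsum_eq.symm
      _ ≤ ∑' q, C ^ pt * ‖slice H F q‖ ^ pt :=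
          Summable.tsum_le_tsum hle hAtot.summable (hFtot.summable.mul_left _)
      _ = C ^ pt * ∑' q, ‖slice H F q‖ ^ pt := tsum_mul_left
      _ = C ^ pt * ‖F‖ ^ pt := by rw [hFtot.tsum_eq]
      _ = (C * ‖F‖) ^ pt := (Real.mul_rpow (norm_nonneg _) (norm_nonneg _)).symm
  have h2 : pt = ((2 : ℕ) : ℝ) := by rw [hpt]; norm_num
  rw [h2, Real.rpow_natCast, Real.rpow_natCast] at key
  exact (pow_le_pow_iff_left₀ (norm_nonneg _)
    (mul_nonneg (norm_nonneg _) (norm_nonneg _)) two_ne_zero).mp key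

end Coset

section Char

variable {G : Type*} [Group G]

lemma subtypeDomain_mapDomain (H : Subgroup G) (f : MonoidAlgebra ℂ G)
    (hf : (↑f.coeff.support : Set G) ⊆ (H : Set G)) :
    MonoidAlgebra.mapDomain (fun h : H => (h : G)) (MonoidAlgebra.ofCoeff (Finsupp.subtypeDomain (· ∈ H) f.coeff)) = f := by
  ext g
  by_cases hg : g ∈ H
  · have hcoe : g = ((⟨g, hg⟩ : H) : G) := rfl
    rw [hcoe, MonoidAlgebra.coeff_mapDomain, Finsupp.mapDomain_apply Subtype.coe_injective, MonoidAlgebra.coeff_ofCoeff, Finsupp.subtypeDomain_apply]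
  · rw [MonoidAlgebra.coeff_mapDomain, Finsupp.mapDomain_notin_range]
    · symm
      by_contra hne
      exact hg (hf (Finset.mem_coe.mpr (Finsupp.mem_support_iff.mpr hne)))
    · rintro ⟨⟨x, hx⟩, rfl⟩
      exact hg hx

lemma isAmenable_iff (H : Subgroup G) :
    IsAmenable (H : Type _) ↔ ∀ f : MonoidAlgebra ℂ G,
      (↑f.coeff.support : Set G) ⊆ (H : Set G) →
      ‖repAlg (trivialRep G) f‖ ≤ ‖repAlg (regularRep G) f‖ := by
  constructor
  · intro hA f hf
    set f₀ : MonoidAlgebra ℂ (H : Type _) := MonoidAlgebra.ofCoeff (Finsupp.subtypeDomain (· ∈ H) f.coeff) with hf₀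
    have hmap : MonoidAlgebra.mapDomain (fun h : H => (h : G)) f₀ = f :=
      subtypeDomain_mapDomain H f hf
    have h1 : ‖repAlg (trivialRep G) f‖ = ‖repAlg (trivialRep (H : Type _)) f₀‖ := by
      rw [norm_repAlg_trivial, norm_repAlg_trivial, ← hmap,
        MonoidAlgebra.coeff_mapDomain, Finsupp.sum_mapDomain_index_inj Subtype.coe_injective]
    rw [h1, ← hmap]
    exact le_trans (hA f₀) (norm_regular_le H f₀)
  · intro hP f₀
    have hsupp : (↑(MonoidAlgebra.mapDomain (fun h : H => (h : G)) f₀).coeff.support : Set G)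
        ⊆ (H : Set G) := by
      intro g hg
      have hg' := Finsupp.mapDomain_support (Finset.mem_coe.mp hg)
      obtain ⟨k, _, rfl⟩ := Finset.mem_image.mp hg'
      exact k.2
    have h1 : ‖repAlg (trivialRep (H : Type _)) f₀‖
        = ‖repAlg (trivialRep G) (MonoidAlgebra.mapDomain (fun h : H => (h : G)) f₀)‖ := by
      rw [norm_repAlg_trivial, norm_repAlg_trivial,
        MonoidAlgebra.coeff_mapDomain, Finsupp.sum_mapDomain_index_inj Subtype.coe_injective]
    calc ‖repAlg (trivialRep (H : Type _)) f₀‖ = _ := h1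
      _ ≤ ‖repAlg (regularRep G) (MonoidAlgebra.mapDomain (fun h : H => (h : G)) f₀)‖ :=
          hP _ hsupp
      _ ≤ ‖repAlg (regularRep (H : Type _)) f₀‖ := norm_regular_ge H f₀

end Char

/-- The set of amenable subgroups of a countable group `G` is closed in
`Sub(G)` for the Chabauty topology. -/
theorem isClosed_amenable_subgroups (G : Type*) [Group G] [Countable G] :
    IsClosed[chabautyTopology G] {H : Subgroup G | IsAmenable H} := by
  letI : TopologicalSpace (Subgroup G) := chabautyTopology G
  have hopen : ∀ g : G, IsOpen {H : Subgroup G | g ∈ H} := by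
    intro g
    have hpre : {H : Subgroup G | g ∈ H}
        = chabautyEmbed G ⁻¹' ((fun b : G → Bool => b g) ⁻¹' {true}) := by
      ext H
      simp [chabautyEmbed]
    rw [hpre]
    exact (continuous_induced_dom.comp continuous_id).isOpen_preimage _
      ((continuous_apply g).isOpen_preimage _ (isOpen_discrete _))
  have hset : {H : Subgroup G | IsAmenable H} =
      ⋂ f : MonoidAlgebra ℂ G, {H : Subgroup G |
        (↑f.coeff.support : Set G) ⊆ (H : Set G) →
        ‖repAlg (trivialRep G) f‖ ≤ ‖repAlg (regularRep G) f‖} := by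
    ext H
    simp only [Set.mem_setOf_eq, Set.mem_iInter]
    exact isAmenable_iff H
  rw [hset]
  refine isClosed_iInter fun f => ?_
  by_cases hf : ‖repAlg (trivialRep G) f‖ ≤ ‖repAlg (regularRep G) f‖
  · have huniv : {H : Subgroup G |
        (↑f.coeff.support : Set G) ⊆ (H : Set G) →
        ‖repAlg (trivialRep G) f‖ ≤ ‖repAlg (regularRep G) f‖} = Set.univ :=
      Set.eq_univ_of_forall fun H _ => hf
    rw [huniv]
    exact isClosed_univ
  · have hcompl : {H : Subgroup G |
        (↑f.coeff.support : Set G) ⊆ (H : Set G) →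
        ‖repAlg (trivialRep G) f‖ ≤ ‖repAlg (regularRep G) f‖}
        = ({H : Subgroup G | (↑f.coeff.support : Set G) ⊆ (H : Set G)})ᶜ := by
      ext H
      simp only [Set.mem_setOf_eq, Set.mem_compl_iff]
      exact ⟨fun h hP => absurd (h hP) hf, fun h hP => absurd hP h⟩
    rw [hcompl]
    apply IsOpen.isClosed_compl
    have hint : {H : Subgroup G | (↑f.coeff.support : Set G) ⊆ (H : Set G)}
        = ⋂ g ∈ f.coeff.support, {H : Subgroup G | g ∈ H} := by
      ext H
      simp [Set.subset_def]
    rw [hint]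
    exact isOpen_biInter_finset fun g _ => hopen g

end QR
end
end

section
/- Let G act by homeomorphisms on a Hausdorff space X, let x ∈ X, and suppose the closure of the orbit Gx contains a point z with trivial stabilizer. Then for every subgroup H of G_x, the trivial subgroup {e} belongs to the Chabauty closure of the conjugacy class of H, and λ_G is weakly contained in λ_{G/H}. -/
open scoped Classical ENNReal Pointwise
open Topology Filter

noncomputable section

namespace QR

section Aux


variable {G : Type*} [Group G]

lemma mem_conjSubgroup {a k : G} {H : Subgroup G} :
    k ∈ conjSubgroup a H ↔ a⁻¹ * k * a ∈ H := by
  constructor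
  · rintro ⟨h, hh, rfl⟩
    simpa [MulAut.conj, mul_assoc] using hh
  · intro hk
    exact ⟨a⁻¹ * k * a, hk, by simp [MulAut.conj]; group⟩

lemma conjSubgroup_le_stab {X : Type*} [MulAction G X] {H : Subgroup G} {x : X}
    (hH : H ≤ MulAction.stabilizer G x) (a : G) :
    conjSubgroup a H ≤ MulAction.stabilizer G (a • x) := by
  rintro k hk
  rw [mem_conjSubgroup] at hk
  have hx : (a⁻¹ * k * a) • x = x := hH hk
  rw [MulAction.mem_stabilizer_iff]
  have : k • a • x = a • (a⁻¹ * k * a) • x := by simp [mul_smul]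
  rw [this, hx]

lemma avoid {X : Type*} [TopologicalSpace X] [T2Space X] [MulAction G X]
    (hc : ∀ g : G, Continuous fun x : X => g • x) (x z : X)
    (hz : z ∈ closure (MulAction.orbit G x)) (hztriv : MulAction.stabilizer G z = ⊥)
    (D : Finset G) :
    ∃ a : G, ∀ d ∈ D, d ≠ 1 → d ∉ MulAction.stabilizer G (a • x) := by
  have key : ∀ d : G, d ≠ 1 → ∀ᶠ w in 𝓝 z, d • w ≠ w := by
    intro d hd
    have hne : d • z ≠ z := by
      intro h
      exact hd (Subgroup.mem_bot.1 (hztriv ▸ MulAction.mem_stabilizer_iff.2 h))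
    have hopen : IsOpen {w : X | d • w ≠ w} := by
      have heq : {w : X | d • w ≠ w} = (fun w => (d • w, w)) ⁻¹' (Set.diagonal X)ᶜ := by
        ext w; simp [Set.diagonal]
      rw [heq]
      exact (isClosed_diagonal.isOpen_compl).preimage ((hc d).prodMk continuous_id)
    exact hopen.mem_nhds hne
  have hall : ∀ᶠ w in 𝓝 z, ∀ d ∈ D, d ≠ 1 → d • w ≠ w := by
    rw [Filter.eventually_all_finset]
    intro d hd
    by_cases h1 : d = 1
    · exact Filter.Eventually.of_forall fun w hd1 => absurd h1 hd1
    · exact (key d h1).mono fun w hw _ => hw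
  have hfreq := Filter.Frequently.and_eventually (mem_closure_iff_frequently.1 hz) hall
  obtain ⟨w, hw2, hw1⟩ := hfreq.exists
  obtain ⟨a, rfl⟩ := MulAction.mem_orbit_iff.1 hw2
  exact ⟨a, fun d hd h1 hmem => hw1 d hd h1 hmem⟩

lemma single_apply'' {α : Type*} [DecidableEq α] (i : α) (c : ℂ) (j : α) :
    (lp.single 2 i c : ∀ _ : α, ℂ) j = if j = i then c else 0 := by
  rcases eq_or_ne j i with rfl | h
  · simp [lp.single_apply_self]
  · simp [lp.single_apply_ne _ _ _ h, h]

lemma permRep_apply {Γ Y : Type*} [Group Γ] [MulAction Γ Y] (g : Γ)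
    (F : lp (fun _ : Y => ℂ) 2) (y : Y) :
    (permRep Γ Y g F : ∀ _ : Y, ℂ) y = F (g⁻¹ • y) := rfl

lemma repAlg_permRep_apply {Γ Y : Type*} [Group Γ] [MulAction Γ Y] (f : MonoidAlgebra ℂ Γ)
    (F : lp (fun _ : Y => ℂ) 2) (y : Y) :
    (repAlg (permRep Γ Y) f F : ∀ _ : Y, ℂ) y = ∑ g ∈ f.coeff.support, f.coeff g * F (g⁻¹ • y) := by
  have h1 : repAlg (permRep Γ Y) f = ∑ g ∈ f.coeff.support, f.coeff g • permRep Γ Y g := by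
    rw [repAlg, MonoidAlgebra.lift_apply]; rfl
  rw [h1, ContinuousLinearMap.sum_apply, lp.coeFn_sum, Finset.sum_apply]
  refine Finset.sum_congr rfl fun g hg => ?_
  rw [ContinuousLinearMap.smul_apply, lp.coeFn_smul, Pi.smul_apply, smul_eq_mul,
    permRep_apply]

lemma mem_closure_finsupp {α : Type*} (F : lp (fun _ : α => ℂ) 2) :
    F ∈ closure {F' : lp (fun _ : α => ℂ) 2 | ∃ S : Finset α, ∀ y ∉ S, F' y = 0} := by
  have h := lp.hasSum_single (E := fun _ : α => ℂ) (by norm_num : (2 : ℝ≥0∞) ≠ ⊤) F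
  refine mem_closure_of_tendsto h (Filter.Eventually.of_forall fun s => ⟨s, fun y hy => ?_⟩)
  rw [lp.coeFn_sum, Finset.sum_apply]
  refine Finset.sum_eq_zero fun i hi => ?_
  exact lp.single_apply_ne _ _ _ (fun h' => hy (h' ▸ hi))

end Aux

lemma quasiRegRep_coord {G : Type*} [Group G] (H : Subgroup G) (f : MonoidAlgebra ℂ G)
    (F : lp (fun _ : G ⧸ H => ℂ) 2) (q : G ⧸ H) :
    (repAlg (quasiRegRep G H) f F : ∀ _ : G ⧸ H, ℂ) q
      = ∑ g ∈ f.coeff.support, f.coeff g * F (g⁻¹ • q) :=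
  repAlg_permRep_apply f F q

lemma regularRep_coord {G : Type*} [Group G] (f : MonoidAlgebra ℂ G)
    (F : lp (fun _ : G => ℂ) 2) (y : G) :
    (repAlg (regularRep G) f F : ∀ _ : G, ℂ) y
      = ∑ g ∈ f.coeff.support, f.coeff g * F (g⁻¹ * y) := by
  simpa [smul_eq_mul, regularRep] using repAlg_permRep_apply (Y := G) f F y

lemma core {G : Type*} [Group G] (H : Subgroup G)
    (havoid : ∀ D : Finset G, ∃ a : G, ∀ d ∈ D, d ≠ 1 → d ∉ conjSubgroup a H)
    (f : MonoidAlgebra ℂ G) (S : Finset G) (F : lp (fun _ : G => ℂ) 2)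
    (hF : ∀ y ∉ S, F y = 0) :
    ‖repAlg (regularRep G) f F‖ ≤ ‖repAlg (quasiRegRep G H) f‖ * ‖F‖ := by
  have hr : (0 : ℝ) < (2 : ℝ≥0∞).toReal := by norm_num
  set P : Finset G := f.coeff.support with hP
  set T : Finset G := S ∪ P * S with hT
  obtain ⟨a, ha⟩ := havoid ((T ×ˢ T).image fun p => p.1⁻¹ * p.2)
  have hinj : ∀ t ∈ T, ∀ t' ∈ T, t⁻¹ * t' ∈ conjSubgroup a H → t = t' := by
    intro t ht t' ht' hk
    by_contra hne
    have hd1 : t⁻¹ * t' ≠ 1 := fun h => hne (by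
      have := inv_mul_eq_one.1 h; exact this)
    exact ha _ (Finset.mem_image.2 ⟨(t, t'), Finset.mem_product.2 ⟨ht, ht'⟩, rfl⟩) hd1 hk
  set ι : G → G ⧸ H := fun t => ((t * a : G) : G ⧸ H) with hι
  have hcoset : ∀ t t' : G, ι t = ι t' ↔ t⁻¹ * t' ∈ conjSubgroup a H := by
    intro t t'
    have he : (t * a)⁻¹ * (t' * a) = a⁻¹ * (t⁻¹ * t') * a := by group
    rw [hι]
    rw [QuotientGroup.eq, he, mem_conjSubgroup]
  have hιinj : ∀ t ∈ T, ∀ t' ∈ T, ι t = ι t' → t = t' := fun t ht t' ht' h =>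
    hinj t ht t' ht' ((hcoset t t').1 h)
  set F' : lp (fun _ : G ⧸ H => ℂ) 2 := ∑ s ∈ S, lp.single 2 (ι s) (F s) with hF'def
  have hF' : ∀ q, (F' : ∀ _ : G ⧸ H, ℂ) q = ∑ s ∈ S, if q = ι s then F s else 0 := by
    intro q
    rw [hF'def, lp.coeFn_sum, Finset.sum_apply]
    exact Finset.sum_congr rfl fun s _ => single_apply'' (ι s) (F s) q
  have hST : S ⊆ T := Finset.subset_union_left
  have hPST : (P * S : Finset G) ⊆ T := Finset.subset_union_right
  -- value of F' on cosets ι s₀, s₀ ∈ S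
  have hF'val : ∀ s₀ ∈ S, (F' : ∀ _ : G ⧸ H, ℂ) (ι s₀) = F s₀ := by
    intro s₀ hs₀
    rw [hF']
    rw [Finset.sum_eq_single_of_mem s₀ hs₀]
    · rw [if_pos rfl]
    · intro s hs hne
      rw [if_neg fun h => hne (hιinj s₀ (hST hs₀) s (hST hs) h).symm]
  -- ‖F'‖ = ‖F‖
  have hnorm : ‖F'‖ = ‖F‖ := by
    rw [lp.norm_eq_tsum_rpow hr, lp.norm_eq_tsum_rpow hr]
    congr 1
    have h1 : ∑' q : G ⧸ H, ‖(F' : ∀ _ : G ⧸ H, ℂ) q‖ ^ (2 : ℝ≥0∞).toReal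
        = ∑ q ∈ S.image ι, ‖(F' : ∀ _ : G ⧸ H, ℂ) q‖ ^ (2 : ℝ≥0∞).toReal := by
      refine tsum_eq_sum fun q hq => ?_
      have : (F' : ∀ _ : G ⧸ H, ℂ) q = 0 := by
        rw [hF']
        refine Finset.sum_eq_zero fun s hs => ?_
        rw [if_neg fun h => hq (Finset.mem_image.2 ⟨s, hs, h.symm⟩)]
      rw [this, norm_zero, Real.zero_rpow hr.ne']
    have h2 : ∑' y : G, ‖F y‖ ^ (2 : ℝ≥0∞).toReal
        = ∑ y ∈ S, ‖F y‖ ^ (2 : ℝ≥0∞).toReal := by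
      refine tsum_eq_sum fun y hy => ?_
      rw [hF y hy, norm_zero, Real.zero_rpow hr.ne']
    rw [h1, h2, Finset.sum_image (fun s hs s' hs' h => hιinj s (hST hs) s' (hST hs') h)]
    exact Finset.sum_congr rfl fun s hs => by rw [hF'val s hs]
  -- A F vanishes off P * S
  have hAFsupp : ∀ y ∉ (P * S : Finset G),
      (repAlg (regularRep G) f F : ∀ _ : G, ℂ) y = 0 := by
    intro y hy
    rw [regularRep_coord]
    refine Finset.sum_eq_zero fun g hg => ?_
    have : F (g⁻¹ * y) = 0 := by
      apply hF
      intro hmem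
      exact hy (by
        have := Finset.mul_mem_mul (hP ▸ hg) hmem
        simpa [mul_assoc] using this)
    rw [this, mul_zero]
  -- matching of coordinates
  have hmatch : ∀ y ∈ (P * S : Finset G),
      (repAlg (quasiRegRep G H) f F' : ∀ _ : G ⧸ H, ℂ) (ι y)
        = (repAlg (regularRep G) f F : ∀ _ : G, ℂ) y := by
    intro y hy
    rw [quasiRegRep_coord, regularRep_coord]
    refine Finset.sum_congr rfl fun g hg => ?_
    congr 1
    have hq : g⁻¹ • (ι y) = ι (g⁻¹ * y) := by
      rw [hι]
      show g⁻¹ • ((y * a : G) : G ⧸ H) = ((g⁻¹ * y * a : G) : G ⧸ H)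
      rw [MulAction.Quotient.smul_mk]
      congr 1
      simp [smul_eq_mul, mul_assoc]
    rw [hq, hF']
    have hcond : ∀ s ∈ S, (ι (g⁻¹ * y) = ι s) ↔ (g⁻¹ * y = s) := by
      intro s hs
      constructor
      · intro h
        have hk := (hcoset (g⁻¹ * y) s).1 h
        have he : (g⁻¹ * y)⁻¹ * s = y⁻¹ * (g * s) := by group
        rw [he] at hk
        have hgs : (g * s : G) ∈ T := hPST (Finset.mul_mem_mul (hP ▸ hg) hs)
        have := hinj y (hPST hy) (g * s) hgs hk
        rw [this]
        group
      · intro h; rw [h]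
    have : ∑ s ∈ S, (if ι (g⁻¹ * y) = ι s then F s else 0)
        = ∑ s ∈ S, (if g⁻¹ * y = s then F s else 0) :=
      Finset.sum_congr rfl fun s hs => by
        by_cases h : g⁻¹ * y = s
        · rw [if_pos ((hcond s hs).2 h), if_pos h]
        · rw [if_neg fun h' => h ((hcond s hs).1 h'), if_neg h]
    rw [this, Finset.sum_ite_eq]
    by_cases h : g⁻¹ * y ∈ S
    · rw [if_pos h]
    · rw [if_neg h, hF _ h]
  -- ‖A F‖ ≤ ‖B F'‖
  have hAB : ‖repAlg (regularRep G) f F‖ ≤ ‖repAlg (quasiRegRep G H) f F'‖ := by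
    rw [lp.norm_eq_tsum_rpow hr, lp.norm_eq_tsum_rpow hr]
    refine Real.rpow_le_rpow (tsum_nonneg fun y => Real.rpow_nonneg (norm_nonneg _) _) ?_
      (by positivity)
    have h1 : ∑' y : G, ‖(repAlg (regularRep G) f F : ∀ _ : G, ℂ) y‖ ^ (2 : ℝ≥0∞).toReal
        = ∑ y ∈ (P * S : Finset G),
            ‖(repAlg (regularRep G) f F : ∀ _ : G, ℂ) y‖ ^ (2 : ℝ≥0∞).toReal := by
      refine tsum_eq_sum fun y hy => ?_
      rw [hAFsupp y hy, norm_zero, Real.zero_rpow hr.ne']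
    rw [h1]
    have h2 : ∑ y ∈ (P * S : Finset G),
        ‖(repAlg (regularRep G) f F : ∀ _ : G, ℂ) y‖ ^ (2 : ℝ≥0∞).toReal
        = ∑ q ∈ (P * S : Finset G).image ι,
            ‖(repAlg (quasiRegRep G H) f F' : ∀ _ : G ⧸ H, ℂ) q‖ ^ (2 : ℝ≥0∞).toReal := by
      rw [Finset.sum_image (fun t ht t' ht' h => hιinj t (hPST ht) t' (hPST ht') h)]
      exact Finset.sum_congr rfl fun y hy => by rw [hmatch y hy]
    rw [h2]
    exact Summable.sum_le_tsum _ (fun q _ => Real.rpow_nonneg (norm_nonneg _) _)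
      ((lp.memℓp _).summable hr)
  calc ‖repAlg (regularRep G) f F‖ ≤ ‖repAlg (quasiRegRep G H) f F'‖ := hAB
    _ ≤ ‖repAlg (quasiRegRep G H) f‖ * ‖F'‖ := ContinuousLinearMap.le_opNorm _ _
    _ = ‖repAlg (quasiRegRep G H) f‖ * ‖F‖ := by rw [hnorm]


/-- Let `G` act by homeomorphisms on a Hausdorff space `X`, let `x ∈ X`,
and suppose the closure of the orbit of `x` contains a point `z` with trivial stabilizer.
Then for every subgroup `H ≤ G_x`, the trivial subgroup lies in the Chabauty closure of the
conjugacy class of `H`, and `λ_G` is weakly contained in `λ_{G/H}`. -/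
theorem trivial_in_closure_and_regular_weakly_contained (G X : Type*) [Group G] [Countable G]
    [TopologicalSpace X] [T2Space X] [MulAction G X]
    (hc : ∀ g : G, Continuous fun x : X => g • x) (x z : X)
    (hz : z ∈ closure (MulAction.orbit G x)) (hztriv : MulAction.stabilizer G z = ⊥)
    (H : Subgroup G) (hH : H ≤ MulAction.stabilizer G x) :
    (⊥ : Subgroup G) ∈ closure[chabautyTopology G] (conjClass H) ∧
    WeaklyContained (regularRep G) (quasiRegRep G H) := by
  have havoid : ∀ D : Finset G, ∃ a : G, ∀ d ∈ D, d ≠ 1 → d ∉ conjSubgroup a H := by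
    intro D
    obtain ⟨a, ha⟩ := avoid hc x z hz hztriv D
    exact ⟨a, fun d hd h1 hmem => ha d hd h1 (conjSubgroup_le_stab hH a hmem)⟩
  constructor
  · letI : TopologicalSpace (Subgroup G) := chabautyTopology G
    rw [mem_closure_iff]
    intro o ho hbo
    obtain ⟨V, hV, rfl⟩ := isOpen_induced_iff.1 ho
    obtain ⟨I, u, hu, hsub⟩ := isOpen_pi_iff.1 hV _ hbo
    obtain ⟨a, ha⟩ := havoid I
    refine ⟨conjSubgroup a H, hsub fun i hi => ?_, ⟨a, rfl⟩⟩
    have hchar : chabautyEmbed G (conjSubgroup a H) i = chabautyEmbed G (⊥ : Subgroup G) i := by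
      unfold chabautyEmbed
      apply decide_eq_decide.2
      by_cases h1 : i = 1
      · subst h1; simp [(conjSubgroup a H).one_mem]
      · simp only [Subgroup.mem_bot, h1, iff_false]
        exact ha i hi h1
    rw [hchar]
    exact (hu i hi).2
  · intro f
    refine ContinuousLinearMap.opNorm_le_bound _ (norm_nonneg _) fun F => ?_
    have hclosed : IsClosed {F : lp (fun _ : G => ℂ) 2 |
        ‖repAlg (regularRep G) f F‖ ≤ ‖repAlg (quasiRegRep G H) f‖ * ‖F‖} :=
      isClosed_le ((repAlg (regularRep G) f).continuous.norm)
        (continuous_const.mul continuous_norm)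
    refine closure_minimal ?_ hclosed (mem_closure_finsupp F)
    rintro F' ⟨S, hS⟩
    exact core H havoid f S F' hS


end QR
end
end
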